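/- Let $q = \begin{pmatrix} a & b \\ b & d\end{pmatrix}\mu$ and $w = I\mu$ where $\mu = \sum_{k\in\mathbb{Z}} \delta_k$, $a,b,d \in \mathbb{R}$ with $(a-d)^2 + 4b^2 < 16$. Then the Floquet discriminant of the system $Ju' + qu = \lambda w u$ (with $J = \begin{pmatrix}0&-1\\1&0\end{pmatrix}$, period $\omega=1$) is $D(\lambda) = \frac{16}{\lambda^2 - (a+d)\lambda + ad - b^2 + 4} - 2$ for real $\lambda$; the denominator is positive for all real $\lambda$, $D(\lambda) > -2$ for all $\lambda \in \mathbb{R}$, $D(\lambda) \to -2$ as $\lambda \to \pm\infty$, and $D$ attains its maximum at $\lambda = (a+d)/2$ with maximum value $\geq 2$, with equality exactly when $a = d$ and $b = 0$. -/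

import Mathlib

open Matrix Filter

/-- Explicit Floquet discriminant for the system `Ju' + qu = λwu` with
`q = [[a,b],[b,d]] μ`, `w = I μ`, `μ = ∑_{k∈ℤ} δ_k`, period `ω = 1`, and
`(a-d)² + 4b² < 16`.  Between integers solutions are constant, so the monodromy
matrix over one period is the jump matrix
`M(λ) = (J + ½(Δq - λΔw))⁻¹ (J - ½(Δq - λΔw))` with `Δq = [[a,b],[b,d]]`, `Δw = I`. -/
theorem discrete_example_discriminant (a b d : ℝ)
    (hcond : (a - d) ^ 2 + 4 * b ^ 2 < 16) :
    let J : Matrix (Fin 2) (Fin 2) ℝ := !![0, -1; 1, 0]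
    let Δq : Matrix (Fin 2) (Fin 2) ℝ := !![a, b; b, d]
    let M : ℝ → Matrix (Fin 2) (Fin 2) ℝ := fun lam =>
      (J + (2⁻¹ : ℝ) • (Δq - lam • (1 : Matrix (Fin 2) (Fin 2) ℝ)))⁻¹ *
        (J - (2⁻¹ : ℝ) • (Δq - lam • (1 : Matrix (Fin 2) (Fin 2) ℝ)))
    let D : ℝ → ℝ := fun lam => (M lam).trace
    (∀ lam : ℝ, 0 < lam ^ 2 - (a + d) * lam + (a * d - b ^ 2 + 4)) ∧
    (∀ lam : ℝ, D lam = 16 / (lam ^ 2 - (a + d) * lam + (a * d - b ^ 2 + 4)) - 2) ∧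
    (∀ lam : ℝ, -2 < D lam) ∧
    Tendsto D atTop (nhds (-2)) ∧ Tendsto D atBot (nhds (-2)) ∧
    (∀ lam : ℝ, D lam ≤ D ((a + d) / 2)) ∧
    2 ≤ D ((a + d) / 2) ∧
    (D ((a + d) / 2) = 2 ↔ a = d ∧ b = 0) := by
  intro J Δq M D
  set P : ℝ → ℝ := fun lam => lam ^ 2 - (a + d) * lam + (a * d - b ^ 2 + 4) with hPdef
  have hP : ∀ lam : ℝ, 0 < P lam := by
    intro lam
    simp only [hPdef]
    nlinarith [sq_nonneg (2 * lam - (a + d))]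
  have hA : ∀ lam : ℝ, J + (2⁻¹ : ℝ) • (Δq - lam • (1 : Matrix (Fin 2) (Fin 2) ℝ)) =
      !![(a - lam)/2, b/2 - 1; b/2 + 1, (d - lam)/2] := by
    intro lam
    ext i j
    fin_cases i <;> fin_cases j <;>
      simp [J, Δq, Matrix.one_apply] <;> ring
  have hB : ∀ lam : ℝ, J - (2⁻¹ : ℝ) • (Δq - lam • (1 : Matrix (Fin 2) (Fin 2) ℝ)) =
      !![(lam - a)/2, -1 - b/2; 1 - b/2, (lam - d)/2] := by
    intro lam
    ext i j
    fin_cases i <;> fin_cases j <;>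
      simp [J, Δq, Matrix.one_apply] <;> ring
  have hdet : ∀ lam : ℝ, (!![(a - lam)/2, b/2 - 1; b/2 + 1, (d - lam)/2] :
      Matrix (Fin 2) (Fin 2) ℝ).det = P lam / 4 := by
    intro lam
    simp [Matrix.det_fin_two_of, hPdef]
    ring
  have hD : ∀ lam : ℝ, D lam = 16 / P lam - 2 := by
    intro lam
    have hpl := hP lam
    have hdne : (!![(a - lam)/2, b/2 - 1; b/2 + 1, (d - lam)/2] :
        Matrix (Fin 2) (Fin 2) ℝ).det ≠ 0 := by
      rw [hdet lam]; exact ne_of_gt (div_pos hpl (by norm_num))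
    show ((J + (2⁻¹ : ℝ) • (Δq - lam • (1 : Matrix (Fin 2) (Fin 2) ℝ)))⁻¹ *
        (J - (2⁻¹ : ℝ) • (Δq - lam • (1 : Matrix (Fin 2) (Fin 2) ℝ)))).trace
        = 16 / P lam - 2
    rw [hA, hB, Matrix.inv_def, Matrix.adjugate_fin_two_of, hdet lam,
      Matrix.smul_mul, Matrix.trace_smul, Matrix.mul_fin_two,
      Matrix.trace_fin_two_of, smul_eq_mul, Ring.inverse_eq_inv']
    have : lam ^ 2 - (a + d) * lam + a * d = P lam - 4 + b ^ 2 := by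
      simp [hPdef]; ring
    field_simp
    nlinarith [this]
  refine ⟨hP, hD, ?_, ?_, ?_, ?_, ?_, ?_⟩
  · intro lam
    rw [hD lam]
    have : (0:ℝ) < 16 / P lam := div_pos (by norm_num) (hP lam)
    linarith
  · have hPtop : Tendsto P atTop atTop := by
      have h1 : Tendsto (fun lam : ℝ => (lam - (a + d)/2) ^ 2 +
          (a * d - b ^ 2 + 4 - ((a + d)/2) ^ 2)) atTop atTop :=
        tendsto_atTop_add_const_right _ _
          ((tendsto_pow_atTop two_ne_zero).comp
            (tendsto_atTop_add_const_right _ _ tendsto_id))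
      refine h1.congr (fun lam => ?_)
      simp [hPdef]; ring
    have : Tendsto (fun lam => 16 / P lam - 2) atTop (nhds (-2)) := by
      have := (tendsto_const_nhds (α := ℝ) (x := (16:ℝ))).div_atTop hPtop
      simpa using this.sub_const 2
    exact this.congr (fun lam => (hD lam).symm)
  · have hPtop : Tendsto P atBot atTop := by
      have h1 : Tendsto (fun lam : ℝ => |lam - (a + d)/2| ^ 2 +
          (a * d - b ^ 2 + 4 - ((a + d)/2) ^ 2)) atBot atTop := by
        refine tendsto_atTop_add_const_right _ _ ?_
        have hneg : Tendsto (fun lam : ℝ => lam - (a + d)/2) atBot atBot :=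
          tendsto_atBot_add_const_right _ _ tendsto_id
        exact (tendsto_pow_atTop two_ne_zero).comp (tendsto_abs_atBot_atTop.comp hneg)
      refine h1.congr (fun lam => ?_)
      simp only [hPdef, Function.comp, sq_abs]
      ring
    have : Tendsto (fun lam => 16 / P lam - 2) atBot (nhds (-2)) := by
      have := (tendsto_const_nhds (α := ℝ) (x := (16:ℝ))).div_atTop hPtop
      simpa using this.sub_const 2
    exact this.congr (fun lam => (hD lam).symm)
  · intro lam
    rw [hD lam, hD ((a + d)/2)]
    have hle : P ((a + d)/2) ≤ P lam := by
      simp only [hPdef]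
      nlinarith [sq_nonneg (lam - (a + d)/2)]
    have := div_le_div_of_nonneg_left (by norm_num : (0:ℝ) ≤ 16) (hP ((a + d)/2)) hle
    linarith
  · rw [hD ((a + d)/2)]
    have h4 : P ((a + d)/2) ≤ 4 := by
      simp only [hPdef]
      nlinarith [sq_nonneg (a - d), sq_nonneg b]
    have hpos := hP ((a + d)/2)
    rw [le_sub_iff_add_le, le_div_iff₀ hpos]
    nlinarith
  · rw [hD ((a + d)/2)]
    constructor
    · intro h
      have hpos := hP ((a + d)/2)
      have h16 : 16 = 4 * P ((a + d)/2) := by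
        field_simp at h
        linarith
      have hPval : P ((a + d)/2) = 4 := by linarith
      simp only [hPdef] at hPval
      have had : (a - d) ^ 2 = 0 := by nlinarith [sq_nonneg b]
      have hb : b ^ 2 = 0 := by nlinarith [sq_nonneg (a - d)]
      constructor
      · have := pow_eq_zero_iff (n := 2) (by norm_num) |>.mp had
        linarith [sub_eq_zero.mp this]
      · exact pow_eq_zero_iff (n := 2) (by norm_num) |>.mp hb
    · rintro ⟨rfl, rfl⟩
      have : P ((a + a)/2) = 4 := by simp [hPdef]; ring
      rw [this]; norm_num
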